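/- Let k ≥ 4. (a) If m is an integer with 1 ≤ m ≤ k−1 and m ≥ ⌈(k−3)/2⌉, then S_{n,k} is proper for every integer n with 2^k − 2^{k−m} ≤ n ≤ 2^k − 2^{k−m−1}. (b) S_{n,k} is proper for every integer n with 2^k − 2^{k−⌈(k−3)/2⌉} ≤ n ≤ 2^k − 1. -/

import Mathlib

open Finset

/-- The value of column `j` (0-indexed) of the matrix
`H_k = [H_k^(k-1) | H_k^(k-2) | … | H_k^(0)]`, read as a `k`-bit integer with
row 1 as the most significant bit.  (Column `c` of the block `H_k^(m)` is the
vector `(0,…,0,1,binary_m(c))`, i.e. the integer `2^m + c`; the block `H_k^(m)`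
occupies global columns `[2^k - 2^(m+1), 2^k - 2^m)`, so that
`m = ⌊log₂ (2^k - 1 - j)⌋` and the value is `3·2^m + j - 2^k`.) -/
def colVal (k j : ℕ) : ℕ := 3 * 2 ^ Nat.log2 (2 ^ k - 1 - j) + j - 2 ^ k

/-- Row `i` (1-indexed, `1 ≤ i ≤ k`) of the matrix `H_k(n)` consisting of the
first `n` columns of `H_k`. -/
def Hrow (k n : ℕ) (i : ℕ) : Fin n → ZMod 2 :=
  fun j => if Nat.testBit (colVal k j) (k - i) then 1 else 0

/-- The code `S_{n,k}`: the binary linear code spanned by the rows of `H_k(n)`. -/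
def SCode (k n : ℕ) : Submodule (ZMod 2) (Fin n → ZMod 2) :=
  Submodule.span (ZMod 2) (Set.range fun i : Fin k => Hrow k n ((i : ℕ) + 1))

/-- `w_i`: the Hamming weight of the `i`-th (1-indexed) row of `H_k(n)`. -/
def rowWt (k n i : ℕ) : ℕ := hammingNorm (Hrow k n i)

/-- `α_i`: the `i`-th entry (1-indexed) of the last (`n`-th) column of `H_k(n)`;
`true` encodes `1` and `false` encodes `0`. -/
def alphaBit (k n i : ℕ) : Bool := Nat.testBit (colVal k (n - 1)) (k - i)

/-- Row `i` (1-indexed) of the matrix `M_{n,k}`, whose `j`-th column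
(0-indexed) is the `k`-bit binary representation of `2^k - 1 - j`, MSB first. -/
def Mrow (k n : ℕ) (i : ℕ) : Fin n → ZMod 2 :=
  fun j => if Nat.testBit (2 ^ k - 1 - (j : ℕ)) (k - i) then 1 else 0

/-- The code `D_{n,k}`: the binary linear code spanned by the rows of `M_{n,k}`. -/
def DCode (k n : ℕ) : Submodule (ZMod 2) (Fin n → ZMod 2) :=
  Submodule.span (ZMod 2) (Set.range fun i : Fin k => Mrow k n ((i : ℕ) + 1))

/-- The value of column `j` (0-indexed) of the generalized matrix consisting of
`t-1` copies of `H_k^(k-1)` followed by `H_k(n')`, where `n = 2^(k-1)·(t-1) + n'`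
with `2^(k-1) ≤ n' ≤ 2^k - 1` (so `t - 1 = (n - 2^(k-1)) / 2^(k-1)`). -/
def gcolVal (k n j : ℕ) : ℕ :=
  if j < (n - 2 ^ (k - 1)) / 2 ^ (k - 1) * 2 ^ (k - 1) then
    2 ^ (k - 1) + j % 2 ^ (k - 1)
  else colVal k (j - (n - 2 ^ (k - 1)) / 2 ^ (k - 1) * 2 ^ (k - 1))

/-- The generalized code `S_{n,k}`, defined for every `n ≥ 2^(k-1)`:
the span of the rows of the `k × n` matrix obtained by concatenating `t-1`
copies of `H_k^(k-1)` followed by `H_k(n')`. -/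
def GSCode (k n : ℕ) : Submodule (ZMod 2) (Fin n → ZMod 2) :=
  Submodule.span (ZMod 2)
    (Set.range fun i : Fin k => fun j : Fin n =>
      if Nat.testBit (gcolVal k n (j : ℕ)) (k - ((i : ℕ) + 1)) then (1 : ZMod 2) else 0)

/-- The minimum distance of a binary linear code: the least Hamming weight of a
nonzero codeword. -/
noncomputable def minDist {n : ℕ} (C : Submodule (ZMod 2) (Fin n → ZMod 2)) : ℕ :=
  sInf {w | ∃ c ∈ C, c ≠ 0 ∧ hammingNorm c = w}

/-- `A_w`: the number of codewords of `C` of Hamming weight `w`. -/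
noncomputable def numWt {n : ℕ} (C : Submodule (ZMod 2) (Fin n → ZMod 2)) (w : ℕ) : ℕ :=
  Set.ncard {c : Fin n → ZMod 2 | c ∈ C ∧ hammingNorm c = w}

/-- The undetected error probability
`P_ue(C,p) = Σ_{w=1}^n A_w p^w (1-p)^(n-w)`. -/
noncomputable def Pue {n : ℕ} (C : Submodule (ZMod 2) (Fin n → ZMod 2)) (p : ℝ) : ℝ :=
  ∑ w ∈ Finset.Icc 1 n, (numWt C w : ℝ) * p ^ w * (1 - p) ^ (n - w)

/-- A code is proper if `p ↦ P_ue(C,p)` is monotonically increasing on `[0, 1/2]`. -/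
def IsProper {n : ℕ} (C : Submodule (ZMod 2) (Fin n → ZMod 2)) : Prop :=
  MonotoneOn (Pue C) (Set.Icc (0 : ℝ) (1 / 2))

/-- An `[n,k]` code is satisfactory if `P_ue(C,p) ≤ 2^(k-n)` for all `p ∈ [0,1/2]`. -/
def IsSatisfactory (k : ℕ) {n : ℕ} (C : Submodule (ZMod 2) (Fin n → ZMod 2)) : Prop :=
  ∀ p ∈ Set.Icc (0 : ℝ) (1 / 2), Pue C p ≤ (2 : ℝ) ^ ((k : ℤ) - (n : ℤ))

/-- The binary entropy function `h(x) = -x log₂ x - (1-x) log₂ (1-x)`. -/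
noncomputable def binEnt (x : ℝ) : ℝ :=
  -(x * Real.logb 2 x) - (1 - x) * Real.logb 2 (1 - x)

/-- `U_m = (2^(m+2) - 3)·(1 - h((2^(m+1) - 2)/(2^(m+2) - 3)))`. -/
noncomputable def Ufun (m : ℕ) : ℝ :=
  ((2 : ℝ) ^ (m + 2) - 3) * (1 - binEnt (((2 : ℝ) ^ (m + 1) - 2) / ((2 : ℝ) ^ (m + 2) - 3)))

namespace Stmt9Aux

/-- bit of `X` at position `i`, as an element of `ZMod 2`. -/
def bz (X i : ℕ) : ZMod 2 := if X.testBit i then 1 else 0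

/-- inner product of the low `k` bits. -/
def ip (k X v : ℕ) : ZMod 2 := ∑ i ∈ Finset.range k, bz X i * bz v i

/-- number of `s < u` with `⟨X, s⟩ = 1`. -/
def qc (k X u : ℕ) : ℕ := ((Finset.range u).filter fun s => ip k X s = 1).card

lemma zmod2_cases (z : ZMod 2) : z = 0 ∨ z = 1 := by revert z; decide

lemma zmod2_ne_one {z : ZMod 2} : ¬ z = 1 ↔ z = 0 := by revert z; decide

lemma bz_xor (X Y i : ℕ) : bz (X ^^^ Y) i = bz X i + bz Y i := by
  simp only [bz, Nat.testBit_xor]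
  cases hX : X.testBit i <;> cases hY : Y.testBit i <;> simp <;> decide

lemma ip_xor (k X Y v : ℕ) : ip k (X ^^^ Y) v = ip k X v + ip k Y v := by
  simp only [ip, bz_xor, add_mul, Finset.sum_add_distrib]

lemma bz_zero (i : ℕ) : bz 0 i = 0 := by simp [bz]

lemma ip_zero_left (k v : ℕ) : ip k 0 v = 0 := by simp [ip, bz_zero]

lemma ip_zero_right (k X : ℕ) : ip k X 0 = 0 := by simp [ip, bz_zero]

lemma bz_of_lt {r : ℕ} {i t : ℕ} (hr : r < 2 ^ t) (hti : t ≤ i) : bz r i = 0 := by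
  have : r < 2 ^ i := lt_of_lt_of_le hr (Nat.pow_le_pow_right (by norm_num) hti)
  simp [bz, Nat.testBit_lt_two_pow this]

/-- testBit of a split number. -/
lemma testBit_split (t B r i : ℕ) (hr : r < 2 ^ t) :
    (2 ^ t * B + r).testBit i = if i < t then r.testBit i else B.testBit (i - t) := by
  rcases lt_or_ge i t with h | h
  · simp only [if_pos h]
    rw [Nat.testBit_eq_decide_div_mod_eq, Nat.testBit_eq_decide_div_mod_eq]
    have ht : 2 ^ t = 2 ^ i * 2 ^ (t - i) := by
      rw [← pow_add]; congr 1; omega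
    have h2 : 2 ^ t * B + r = 2 ^ i * (2 ^ (t - i) * B) + r := by rw [ht]; ring
    rw [h2, Nat.mul_add_div (Nat.two_pow_pos i)]
    have : 2 ^ (t - i) * B = 2 * (2 ^ (t - i - 1) * B) := by
      have : 2 ^ (t - i) = 2 * 2 ^ (t - i - 1) := by
        rw [← pow_succ']; congr 1; omega
      rw [this]; ring
    rw [this, Nat.add_comm, Nat.add_mul_mod_self_left]
  · rw [if_neg (show ¬ i < t by omega)]
    rw [Nat.testBit_eq_decide_div_mod_eq, Nat.testBit_eq_decide_div_mod_eq]
    have h1 : (2 ^ t * B + r) / 2 ^ i = B / 2 ^ (i - t) := by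
      have ht : 2 ^ i = 2 ^ t * 2 ^ (i - t) := by
        rw [← pow_add]; congr 1; omega
      rw [ht, ← Nat.div_div_eq_div_mul, Nat.mul_add_div (Nat.two_pow_pos t),
        Nat.div_eq_of_lt hr, Nat.add_zero]
    rw [h1]

lemma testBit_mul (t B i : ℕ) :
    (2 ^ t * B).testBit i = if i < t then false else B.testBit (i - t) := by
  have := testBit_split t B 0 i (Nat.two_pow_pos t)
  simpa using this

lemma bz_split (t B r i : ℕ) (hr : r < 2 ^ t) :
    bz (2 ^ t * B + r) i = bz (2 ^ t * B) i + bz r i := by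
  rcases lt_or_ge i t with h | h
  · simp [bz, testBit_split t B r i hr, testBit_mul, if_pos h]
  · rw [show bz r i = 0 from bz_of_lt hr h]
    simp [bz, testBit_split t B r i hr, testBit_mul, if_neg (by omega : ¬ i < t)]

lemma ip_split (k t B r : ℕ) (hr : r < 2 ^ t) :
    ip k X (2 ^ t * B + r) = ip k X (2 ^ t * B) + ip k X r := by
  simp only [ip, bz_split t B r _ hr, mul_add, Finset.sum_add_distrib]

lemma ip_two_pow {k b : ℕ} (X : ℕ) (hb : b < k) : ip k X (2 ^ b) = bz X b := by
  rw [ip]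
  rw [Finset.sum_eq_single b]
  · simp [bz, Nat.testBit_two_pow_self]
  · intro i _ hib
    have : (2 ^ b).testBit i = false := Nat.testBit_two_pow_of_ne (Ne.symm hib)
    simp [bz, this]
  · intro h; exact absurd (Finset.mem_range.mpr hb) h

lemma ip_comm (k X v : ℕ) : ip k X v = ip k v X := by
  simp [ip, mul_comm]

lemma ip_low_zero {k t X v : ℕ} (ht : ∀ i < t, X.testBit i = false) (hv : v < 2 ^ t) :
    ip k X v = 0 := by
  rw [ip]
  apply Finset.sum_eq_zero
  intro i _
  rcases lt_or_ge i t with h | h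
  · simp [bz, ht i h]
  · rw [bz_of_lt hv h, mul_zero]

lemma exists_lsb {X t : ℕ} (h : X % 2 ^ t ≠ 0) :
    ∃ v < t, X.testBit v = true ∧ ∀ i < v, X.testBit i = false := by
  obtain ⟨i, hi⟩ := Nat.exists_testBit_of_ne_zero h
  rw [Nat.testBit_mod_two_pow] at hi
  simp only [Bool.and_eq_true, decide_eq_true_eq] at hi
  obtain ⟨hit, hX⟩ := hi
  have hex : ∃ j, X.testBit j = true := ⟨i, hX⟩
  refine ⟨Nat.find hex, ?_, Nat.find_spec hex, ?_⟩
  · exact lt_of_le_of_lt (Nat.find_min' hex hX) hit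
  · intro j hj
    have := Nat.find_min hex hj
    simpa using this

lemma count_congr {u : ℕ} {P Q : ℕ → Prop} [DecidablePred P] [DecidablePred Q]
    (h : ∀ s < u, (P s ↔ Q s)) :
    ((Finset.range u).filter P).card = ((Finset.range u).filter Q).card := by
  congr 1
  apply Finset.filter_congr
  intro s hs
  simp only [Finset.mem_range] at hs
  simp [h s hs]

lemma count_compl (k X : ℕ) {u : ℕ} :
    ((Finset.range u).filter fun s => ip k X s = 0).card = u - qc k X u := by
  have h := Finset.card_filter_add_card_filter_not
    (s := Finset.range u) (p := fun s => ip k X s = 1)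
  rw [Finset.card_range] at h
  have h2 : ((Finset.range u).filter fun s => ¬ ip k X s = 1).card
      = ((Finset.range u).filter fun s => ip k X s = 0).card := by
    apply count_congr; intro s _; exact zmod2_ne_one
  unfold qc
  omega

/-- Base counting: for `σ ≤ 2^(v+1)`, with `v` the lowest set bit of `X`, `v < k`:
the number of `s < σ` with `⟨X,s⟩ = 1` is `σ - min σ 2^v`. -/
lemma qc_base {k X v : ℕ} (hvk : v < k) (hbit : X.testBit v = true)
    (hlow : ∀ i < v, X.testBit i = false) {σ : ℕ} (hσ : σ ≤ 2 ^ (v + 1)) :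
    qc k X σ = σ - min σ (2 ^ v) := by
  have hp : 2 ^ (v+1) = 2 * 2 ^ v := by rw [pow_succ]; ring
  have hkey : ∀ s < σ, (ip k X s = 1 ↔ 2 ^ v ≤ s) := by
    intro s hs
    rcases lt_or_ge s (2 ^ v) with h | h
    · rw [ip_low_zero hlow h]
      simp only [show ((0:ZMod 2) = 1) ↔ False by decide, false_iff]
      omega
    · have hr : s - 2 ^ v < 2 ^ v := by omega
      have hs2 : s = 2 ^ v * 1 + (s - 2 ^ v) := by omega
      rw [hs2, ip_split k v 1 (s - 2^v) hr, mul_one, ip_two_pow X hvk,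
        ip_low_zero hlow hr]
      constructor
      · intro _; omega
      · intro _; simp [bz, hbit]
  unfold qc
  rw [count_congr hkey]
  have : (Finset.range σ).filter (fun s => 2 ^ v ≤ s) = Finset.Ico (2 ^ v) σ := by
    ext s; simp only [Finset.mem_Ico, Finset.mem_filter, Finset.mem_range]; omega
  rw [this, Nat.card_Ico]
  omega

/-- Main counting lemma by induction on the number of complete `2^(v+1)`-blocks. -/
lemma qc_full {k X v : ℕ} (hvk : v < k) (hbit : X.testBit v = true)
    (hlow : ∀ i < v, X.testBit i = false) :
    ∀ W {σ : ℕ}, σ ≤ 2 ^ (v + 1) →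
      qc k X (2 ^ (v + 1) * W + σ) =
        2 ^ v * W + (if ip k X (2 ^ (v + 1) * W) = 1
          then min σ (2 ^ v) else σ - min σ (2 ^ v)) := by
  intro W
  induction W with
  | zero =>
    intro σ hσ
    rw [mul_zero, zero_add, mul_zero, zero_add, ip_zero_right]
    rw [if_neg (by decide)]
    exact qc_base hvk hbit hlow hσ
  | succ W ih =>
    intro σ hσ
    have hpow : 2 ^ (v + 1) = 2 * 2 ^ v := by rw [pow_succ]; ring
    set A := 2 ^ (v + 1) * (W + 1) with hAdef
    have hsplit : Finset.range (A + σ) =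
        Finset.range A ∪ Finset.Ico A (A + σ) := by
      simp only [Finset.range_eq_Ico]
      exact (Finset.Ico_union_Ico_eq_Ico (by omega) (by omega)).symm
    have hdisj : Disjoint (Finset.range A) (Finset.Ico A (A + σ)) := by
      rw [Finset.disjoint_left]
      intro a ha hb
      simp only [Finset.mem_range] at ha
      simp only [Finset.mem_Ico] at hb
      omega
    have hcard : qc k X (A + σ) = qc k X A +
        ((Finset.Ico A (A + σ)).filter fun s => ip k X s = 1).card := by
      unfold qc
      rw [hsplit, Finset.filter_union, Finset.card_union_of_disjoint
        (Finset.disjoint_filter_filter hdisj)]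
    have hfirst : qc k X A = 2 ^ v * (W + 1) := by
      have h1 := ih (σ := 2 ^ (v+1)) le_rfl
      have h2 : A = 2 ^ (v+1) * W + 2 ^ (v+1) := by rw [hAdef]; ring
      rw [h2, h1]
      have hmin : min (2 ^ (v+1)) (2 ^ v) = 2 ^ v := by
        apply min_eq_right; omega
      rw [hmin]
      have hx : 2 ^ v * (W + 1) = 2 ^ v * W + 2 ^ v := by ring
      split <;> omega
    have hshift : ((Finset.Ico A (A + σ)).filter fun s => ip k X s = 1).card =
        ((Finset.range σ).filter fun r => ip k X A + ip k X r = 1).card := by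
      apply Finset.card_nbij' (i := fun s => s - A) (j := fun r => A + r)
      · intro a ha
        simp only [Finset.mem_coe, Finset.mem_filter, Finset.mem_Ico] at ha
        simp only [Finset.mem_coe, Finset.mem_filter, Finset.mem_range]
        obtain ⟨⟨h1, h2⟩, h3⟩ := ha
        refine ⟨by omega, ?_⟩
        rw [show a = 2 ^ (v+1) * (W+1) + (a - A) from by omega] at h3
        rw [ip_split k (v+1) (W+1) (a - A) (by omega)] at h3
        exact h3
      · intro r hr
        simp only [Finset.mem_coe, Finset.mem_filter, Finset.mem_range] at hr
        simp only [Finset.mem_coe, Finset.mem_filter, Finset.mem_Ico]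
        obtain ⟨h1, h2⟩ := hr
        refine ⟨⟨by omega, by omega⟩, ?_⟩
        rw [hAdef, ip_split k (v+1) (W+1) r (by omega)]
        rw [← hAdef]
        exact h2
      · intro a ha
        simp only [Finset.mem_coe, Finset.mem_filter, Finset.mem_Ico] at ha
        dsimp only
        omega
      · intro r _
        dsimp only
        omega
    have hsecond : ((Finset.Ico A (A + σ)).filter fun s => ip k X s = 1).card =
        (if ip k X A = 1 then min σ (2 ^ v) else σ - min σ (2 ^ v)) := by
      rw [hshift]
      rcases zmod2_cases (ip k X A) with h | h
      · rw [h, if_neg (show ¬ (0:ZMod 2) = 1 by decide)]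
        have he : ((Finset.range σ).filter fun r => (0:ZMod 2) + ip k X r = 1).card
            = qc k X σ := by
          unfold qc; apply count_congr; intro s _
          rw [zero_add]
        rw [he, qc_base hvk hbit hlow hσ]
      · rw [h, if_pos rfl]
        have he : ((Finset.range σ).filter fun r => (1:ZMod 2) + ip k X r = 1).card
            = ((Finset.range σ).filter fun r => ip k X r = 0).card := by
          apply count_congr; intro s _
          constructor
          · intro hh
            rcases zmod2_cases (ip k X s) with h0 | h1
            · exact h0
            · rw [h1] at hh; exact absurd hh (by decide)
          · intro hh; rw [hh]; decide
        rw [he, count_compl, qc_base hvk hbit hlow hσ]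
        have : min σ (2 ^ v) ≤ σ := min_le_left _ _
        omega
    have hgoal : 2 ^ (v+1) * (W+1) + σ = A + σ := by rw [hAdef]
    rw [hgoal, hcard, hfirst, hsecond, hAdef]

/-- Counting over a full power range `[0, 2^t)`. -/
lemma qc_pow {k X v : ℕ} (hvk : v < k) (hbit : X.testBit v = true)
    (hlow : ∀ i < v, X.testBit i = false) {t : ℕ} (hvt : v < t) :
    qc k X (2 ^ t) = 2 ^ (t - 1) := by
  have h1 : 2 ^ t = 2 ^ (v+1) * 2 ^ (t - 1 - v) + 0 := by
    rw [add_zero, ← pow_add]; congr 1; omega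
  have h2 : 2 ^ (t - 1) = 2 ^ v * 2 ^ (t - 1 - v) := by
    rw [← pow_add]; congr 1; omega
  rw [h1, qc_full hvk hbit hlow (2 ^ (t-1-v)) (Nat.zero_le _), h2]
  split <;> simp

/-- The deviation bound: `|2·qc(X,u) − u| ≤ 2^v`. -/
lemma qc_dev {k X v : ℕ} (hvk : v < k) (hbit : X.testBit v = true)
    (hlow : ∀ i < v, X.testBit i = false) (u : ℕ) :
    u ≤ 2 * qc k X u + 2 ^ v ∧ 2 * qc k X u ≤ u + 2 ^ v := by
  have hdm : u = 2 ^ (v+1) * (u / 2 ^ (v+1)) + u % 2 ^ (v+1) := (Nat.div_add_mod _ _).symm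
  have hσ : u % 2 ^ (v+1) < 2 ^ (v+1) := Nat.mod_lt _ (Nat.two_pow_pos _)
  have h := qc_full hvk hbit hlow (u / 2 ^ (v+1)) (le_of_lt hσ)
  rw [← hdm] at h
  set σ := u % 2 ^ (v+1) with hσdef
  set W := u / 2 ^ (v+1) with hWdef
  have hpow : 2 ^ (v + 1) = 2 * 2 ^ v := by rw [pow_succ]; ring
  have hWW : 2 ^ (v+1) * W = 2 * (2 ^ v * W) := by rw [hpow]; ring
  rcases le_total σ (2 ^ v) with hm | hm
  · rw [min_eq_left hm] at h
    split at h <;> omega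
  · rw [min_eq_right hm] at h
    split at h <;> omega


/-! ### Column values -/

lemma log2_unique {M y : ℕ} (h1 : 2 ^ M ≤ y) (h2 : y < 2 ^ (M + 1)) :
    Nat.log2 y = M := by
  rw [Nat.log2_eq_log_two]
  exact Nat.log_eq_of_pow_le_of_lt_pow h1 h2

lemma colVal_eq {k M j : ℕ} (hM : M < k) (h1 : 2 ^ k - 2 ^ (M + 1) ≤ j)
    (h2 : j < 2 ^ k - 2 ^ M) :
    colVal k j = 2 ^ M + (j - (2 ^ k - 2 ^ (M + 1))) := by
  have hp1 : 2 ^ (M+1) ≤ 2 ^ k := Nat.pow_le_pow_right (by norm_num) (by omega)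
  have hp2 : 2 ^ (M+1) = 2 * 2 ^ M := by rw [pow_succ]; ring
  have hlog : Nat.log2 (2 ^ k - 1 - j) = M := log2_unique (by omega) (by omega)
  unfold colVal
  rw [hlog]
  omega

/-- The function `ψ` enumerating the codewords. -/
def psi (k n X : ℕ) : Fin n → ZMod 2 := fun j => ip k X (colVal k (j : ℕ))

/-! ### Weight of codewords -/

section Weight

variable {k N n : ℕ}

/-- Structure facts about `colVal k j` for `j` in the complete-blocks region. -/
lemma colVal_facts {k N j : ℕ} (hNk : N + 1 ≤ k) (hj : j < 2 ^ k - 2 ^ N) :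
    ∃ M, N ≤ M ∧ M < k ∧
      2 ^ N ≤ colVal k j ∧ colVal k j < 2 ^ k ∧
      Nat.log2 (colVal k j) = M ∧
      2 ^ k - 2 ^ (Nat.log2 (colVal k j) + 1) + (colVal k j - 2 ^ Nat.log2 (colVal k j)) = j := by
  have hN0 : 0 < 2 ^ N := Nat.two_pow_pos N
  have hNK : 2 ^ N ≤ 2 ^ k := Nat.pow_le_pow_right (by norm_num) (by omega)
  set M := Nat.log2 (2 ^ k - 1 - j) with hM
  have hy1 : 2 ^ M ≤ 2 ^ k - 1 - j := by
    rw [hM, Nat.log2_eq_log_two]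
    exact Nat.pow_log_le_self 2 (by omega)
  have hy2 : 2 ^ k - 1 - j < 2 ^ (M + 1) := by
    rw [hM, Nat.log2_eq_log_two]
    exact Nat.lt_pow_succ_log_self (by norm_num) _
  have hM0 : 0 < 2 ^ M := Nat.two_pow_pos M
  have hMk : M < k := by
    by_contra hc
    have : 2 ^ k ≤ 2 ^ M := Nat.pow_le_pow_right (by norm_num) (by omega)
    omega
  have hMN : N ≤ M := by
    by_contra hc
    have : 2 ^ (M+1) ≤ 2 ^ N := Nat.pow_le_pow_right (by norm_num) (by omega)
    omega
  have hp1 : 2 ^ (M+1) ≤ 2 ^ k := Nat.pow_le_pow_right (by norm_num) (by omega)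
  have hp2 : 2 ^ (M+1) = 2 * 2 ^ M := by rw [pow_succ]; ring
  have hNM : 2 ^ N ≤ 2 ^ M := Nat.pow_le_pow_right (by norm_num) hMN
  have hcv : colVal k j = 2 ^ M + (j - (2 ^ k - 2 ^ (M + 1))) :=
    colVal_eq hMk (by omega) (by omega)
  have hlogc : Nat.log2 (colVal k j) = M := by
    rw [hcv]; exact log2_unique (by omega) (by omega)
  exact ⟨M, hMN, hMk, by omega, by omega, hlogc, by rw [hlogc, hcv]; omega⟩

/-- Structure facts for the inverse map. -/
lemma colVal_inv_facts {k N c : ℕ} (hNk : N + 1 ≤ k) (hc1 : 2 ^ N ≤ c) (hc2 : c < 2 ^ k) :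
    2 ^ k - 2 ^ (Nat.log2 c + 1) + (c - 2 ^ Nat.log2 c) < 2 ^ k - 2 ^ N ∧
    colVal k (2 ^ k - 2 ^ (Nat.log2 c + 1) + (c - 2 ^ Nat.log2 c)) = c := by
  have hN0 : 0 < 2 ^ N := Nat.two_pow_pos N
  have hNK : 2 ^ N ≤ 2 ^ k := Nat.pow_le_pow_right (by norm_num) (by omega)
  set M := Nat.log2 c with hM
  have hy1 : 2 ^ M ≤ c := by
    rw [hM, Nat.log2_eq_log_two]; exact Nat.pow_log_le_self 2 (by omega)
  have hy2 : c < 2 ^ (M + 1) := by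
    rw [hM, Nat.log2_eq_log_two]; exact Nat.lt_pow_succ_log_self (by norm_num) _
  have hM0 : 0 < 2 ^ M := Nat.two_pow_pos M
  have hMk : M < k := by
    by_contra hcon
    have : 2 ^ k ≤ 2 ^ M := Nat.pow_le_pow_right (by norm_num) (by omega)
    omega
  have hMN : N ≤ M := by
    by_contra hcon
    have : 2 ^ (M+1) ≤ 2 ^ N := Nat.pow_le_pow_right (by norm_num) (by omega)
    omega
  have hp1 : 2 ^ (M+1) ≤ 2 ^ k := Nat.pow_le_pow_right (by norm_num) (by omega)
  have hp2 : 2 ^ (M+1) = 2 * 2 ^ M := by rw [pow_succ]; ring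
  have hNM : 2 ^ N ≤ 2 ^ M := Nat.pow_le_pow_right (by norm_num) hMN
  constructor
  · omega
  · rw [colVal_eq hMk (by omega) (by omega)]
    omega

/-- the high part of the weight count, via the block bijection. -/
lemma card_high (hNk : N + 1 ≤ k) (X : ℕ) :
    ((Finset.range (2 ^ k - 2 ^ N)).filter fun j => ip k X (colVal k j) = 1).card =
    ((Finset.Ico (2 ^ N) (2 ^ k)).filter fun c => ip k X c = 1).card := by
  apply Finset.card_nbij' (i := fun j => colVal k j)
    (j := fun c => 2 ^ k - 2 ^ (Nat.log2 c + 1) + (c - 2 ^ Nat.log2 c))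
  · intro j hj
    simp only [Finset.mem_coe, Finset.mem_filter, Finset.mem_range] at hj
    obtain ⟨hj1, hj2⟩ := hj
    obtain ⟨M, _, _, h3, h4, _, _⟩ := colVal_facts hNk hj1
    simp only [Finset.mem_coe, Finset.mem_filter, Finset.mem_Ico]
    exact ⟨⟨h3, h4⟩, hj2⟩
  · intro c hc
    simp only [Finset.mem_coe, Finset.mem_filter, Finset.mem_Ico] at hc
    obtain ⟨⟨hc1, hc2⟩, hip⟩ := hc
    obtain ⟨hmem, hcv⟩ := colVal_inv_facts hNk hc1 hc2
    simp only [Finset.mem_coe, Finset.mem_filter, Finset.mem_range]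
    exact ⟨hmem, by rw [hcv]; exact hip⟩
  · intro j hj
    simp only [Finset.mem_coe, Finset.mem_filter, Finset.mem_range] at hj
    obtain ⟨M, _, _, _, _, _, hback⟩ := colVal_facts hNk hj.1
    exact hback
  · intro c hc
    simp only [Finset.mem_coe, Finset.mem_filter, Finset.mem_Ico] at hc
    exact (colVal_inv_facts hNk hc.1.1 hc.1.2).2

/-- the partial-block weight contribution. -/
def q2 (k N u X : ℕ) : ℕ :=
  ((Finset.range u).filter fun s => ip k X (2 ^ (N - 1) + s) = 1).card

variable {u : ℕ}

lemma mod_zero_bits {X t : ℕ} : X % 2 ^ t = 0 ↔ ∀ i < t, X.testBit i = false := by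
  constructor
  · intro h i hi
    have := Nat.testBit_mod_two_pow X t i
    rw [h] at this
    simp only [Nat.zero_testBit] at this
    rw [eq_comm, Bool.and_eq_false_iff] at this
    rcases this with h' | h'
    · simp [hi] at h'
    · exact h'
  · intro h
    apply Nat.eq_of_testBit_eq
    intro i
    rw [Nat.testBit_mod_two_pow, Nat.zero_testBit]
    rcases lt_or_ge i t with hi | hi
    · simp [h i hi]
    · simp [show ¬ i < t by omega]

lemma wt_eq (hN1 : 1 ≤ N) (hNk : N + 1 ≤ k) (hu : u ≤ 2 ^ (N - 1))
    (hn : n = 2 ^ k - 2 ^ N + u) (X : ℕ) (hX0 : 1 ≤ X) (hXk : X < 2 ^ k) :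
    hammingNorm (psi k n X) = (2 ^ (k - 1) - qc k X (2 ^ N)) + q2 k N u X := by
  have hN0 : (0:ℕ) < 2 ^ N := Nat.two_pow_pos N
  have hNhalf : 2 ^ N = 2 * 2 ^ (N - 1) := by
    rw [← pow_succ']; congr 1; omega
  have hNK : 2 ^ N ≤ 2 ^ k := Nat.pow_le_pow_right (by norm_num) (by omega)
  set j₀ := 2 ^ k - 2 ^ N with hj₀
  -- step 1 : hammingNorm as a count over `range n`
  have h1 : hammingNorm (psi k n X) =
      ((Finset.range n).filter fun j => ip k X (colVal k j) = 1).card := by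
    have e1 : hammingNorm (psi k n X) =
        (Finset.univ.filter fun j : Fin n => ip k X (colVal k (j : ℕ)) = 1).card := by
      unfold hammingNorm
      congr 1
      apply Finset.filter_congr
      intro j _
      show (psi k n X j ≠ 0) ↔ _
      unfold psi
      rcases zmod2_cases (ip k X (colVal k (j:ℕ))) with h | h <;> rw [h] <;> simp
    rw [e1, Finset.card_filter, Finset.card_filter]
    exact Fin.sum_univ_eq_sum_range (fun j => if ip k X (colVal k j) = 1 then 1 else 0) n
  -- step 2 : split the columns
  have hsplit : Finset.range n = Finset.range j₀ ∪ Finset.Ico j₀ n := by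
    simp only [Finset.range_eq_Ico]
    exact (Finset.Ico_union_Ico_eq_Ico (by omega) (by omega)).symm
  have hdisj : Disjoint (Finset.range j₀) (Finset.Ico j₀ n) := by
    rw [Finset.disjoint_left]
    intro a ha hb
    simp only [Finset.mem_range] at ha
    simp only [Finset.mem_Ico] at hb
    omega
  have h2 : hammingNorm (psi k n X) =
      ((Finset.range j₀).filter fun j => ip k X (colVal k j) = 1).card +
      ((Finset.Ico j₀ n).filter fun j => ip k X (colVal k j) = 1).card := by
    rw [h1, hsplit, Finset.filter_union,
      Finset.card_union_of_disjoint (Finset.disjoint_filter_filter hdisj)]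
  -- step 3 : high part
  have h3 : ((Finset.range j₀).filter fun j => ip k X (colVal k j) = 1).card =
      2 ^ (k - 1) - qc k X (2 ^ N) := by
    rw [hj₀, card_high hNk X]
    have hs2 : Finset.range (2 ^ k) = Finset.range (2 ^ N) ∪ Finset.Ico (2 ^ N) (2 ^ k) := by
      simp only [Finset.range_eq_Ico]
      exact (Finset.Ico_union_Ico_eq_Ico (by omega) (by omega)).symm
    have hd2 : Disjoint (Finset.range (2 ^ N)) (Finset.Ico (2 ^ N) (2 ^ k)) := by
      rw [Finset.disjoint_left]
      intro a ha hb
      simp only [Finset.mem_range] at ha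
      simp only [Finset.mem_Ico] at hb
      omega
    have hq : qc k X (2 ^ k) = qc k X (2 ^ N) +
        ((Finset.Ico (2 ^ N) (2 ^ k)).filter fun c => ip k X c = 1).card := by
      unfold qc
      rw [hs2, Finset.filter_union,
        Finset.card_union_of_disjoint (Finset.disjoint_filter_filter hd2)]
    have hq2k : qc k X (2 ^ k) = 2 ^ (k - 1) := by
      have hmod : X % 2 ^ k ≠ 0 := by
        rw [Nat.mod_eq_of_lt hXk]; omega
      obtain ⟨v, hvk, hbit, hlow⟩ := exists_lsb hmod
      exact qc_pow hvk hbit hlow hvk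
    omega
  -- step 4 : low part
  have hcol : ∀ j, j₀ ≤ j → j < n → colVal k j = 2 ^ (N - 1) + (j - j₀) := by
    intro j hj1 hj2
    have hNs : N - 1 + 1 = N := by omega
    have := colVal_eq (k := k) (M := N - 1) (j := j) (by omega)
      (by rw [hNs]; omega) (by omega)
    rw [hNs] at this
    rw [this, hj₀]
  have h4 : ((Finset.Ico j₀ n).filter fun j => ip k X (colVal k j) = 1).card =
      q2 k N u X := by
    unfold q2
    apply Finset.card_nbij' (i := fun j => j - j₀) (j := fun s => j₀ + s)
    · intro j hj
      simp only [Finset.mem_coe, Finset.mem_filter, Finset.mem_Ico] at hj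
      obtain ⟨⟨ha, hb⟩, hc⟩ := hj
      simp only [Finset.mem_coe, Finset.mem_filter, Finset.mem_range]
      rw [hcol j ha hb] at hc
      exact ⟨by omega, hc⟩
    · intro s hs
      simp only [Finset.mem_coe, Finset.mem_filter, Finset.mem_range] at hs
      obtain ⟨ha, hb⟩ := hs
      simp only [Finset.mem_coe, Finset.mem_filter, Finset.mem_Ico]
      refine ⟨⟨by omega, by omega⟩, ?_⟩
      rw [hcol (j₀ + s) (by omega) (by omega)]
      simpa using hb
    · intro j hj
      simp only [Finset.mem_coe, Finset.mem_filter, Finset.mem_Ico] at hj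
      dsimp only
      omega
    · intro s _
      dsimp only
      omega
  rw [h2, h3, h4]

/-- Case A : `X % 2^N = 0`, weight is `2^(k-1)`. -/
lemma wt_A (hN1 : 1 ≤ N) (hNk : N + 1 ≤ k) (hu : u ≤ 2 ^ (N - 1))
    (hn : n = 2 ^ k - 2 ^ N + u) (X : ℕ) (hX0 : 1 ≤ X) (hXk : X < 2 ^ k)
    (hmod : X % 2 ^ N = 0) :
    hammingNorm (psi k n X) = 2 ^ (k - 1) := by
  have hbits : ∀ i < N, X.testBit i = false := mod_zero_bits.mp hmod
  have hNhalf : 2 ^ N = 2 * 2 ^ (N - 1) := by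
    rw [← pow_succ']; congr 1; omega
  have hqcN : qc k X (2 ^ N) = 0 := by
    unfold qc
    rw [Finset.card_eq_zero, Finset.filter_eq_empty_iff]
    intro s hs
    simp only [Finset.mem_range] at hs
    rw [ip_low_zero hbits hs]
    decide
  have hq2 : q2 k N u X = 0 := by
    unfold q2
    rw [Finset.card_eq_zero, Finset.filter_eq_empty_iff]
    intro s hs
    simp only [Finset.mem_range] at hs
    rw [ip_low_zero hbits (by omega)]
    decide
  have hk10 : (0:ℕ) < 2 ^ (k - 1) := Nat.two_pow_pos _
  rw [wt_eq hN1 hNk hu hn X hX0 hXk, hqcN, hq2]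
  omega

/-- Case B1 : `X % 2^N ≠ 0` but `X % 2^(N-1) = 0`. -/
lemma wt_B1 (hN1 : 1 ≤ N) (hNk : N + 1 ≤ k) (hu : u ≤ 2 ^ (N - 1))
    (hn : n = 2 ^ k - 2 ^ N + u) (X : ℕ) (hX0 : 1 ≤ X) (hXk : X < 2 ^ k)
    (h1 : X % 2 ^ N ≠ 0) (h2 : X % 2 ^ (N - 1) = 0) :
    hammingNorm (psi k n X) = (2 ^ (k - 1) - 2 ^ (N - 1)) + u := by
  have hlow : ∀ i < N - 1, X.testBit i = false := mod_zero_bits.mp h2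
  obtain ⟨v, hvN, hbit, hlowv⟩ := exists_lsb h1
  have hvev : v = N - 1 := by
    by_contra hc
    have : v < N - 1 := by omega
    rw [hlow v this] at hbit
    exact Bool.false_ne_true hbit
  subst hvev
  have hqcN : qc k X (2 ^ N) = 2 ^ (N - 1) := by
    exact qc_pow (by omega) hbit hlow (by omega)
  have hq2 : q2 k N u X = u := by
    unfold q2
    have : ∀ s ∈ Finset.range u, ip k X (2 ^ (N - 1) + s) = 1 := by
      intro s hs
      simp only [Finset.mem_range] at hs
      rw [show 2 ^ (N-1) + s = 2 ^ (N-1) * 1 + s by ring,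
        ip_split k (N-1) 1 s (by omega), mul_one,
        ip_two_pow X (by omega), ip_low_zero hlow (by omega)]
      simp [bz, hbit]
    rw [Finset.filter_true_of_mem this, Finset.card_range]
  rw [wt_eq hN1 hNk hu hn X hX0 hXk, hqcN, hq2]

/-- Case B2 : `X % 2^(N-1) ≠ 0`; weight and the deviation bound. -/
lemma wt_B2 (hN1 : 1 ≤ N) (hNk : N + 1 ≤ k) (hu : u ≤ 2 ^ (N - 1))
    (hn : n = 2 ^ k - 2 ^ N + u) (X : ℕ) (hX0 : 1 ≤ X) (hXk : X < 2 ^ k)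
    (h2 : X % 2 ^ (N - 1) ≠ 0) :
    hammingNorm (psi k n X) = (2 ^ (k - 1) - 2 ^ (N - 1)) + q2 k N u X ∧
      q2 k N u X ≤ u ∧
      u ≤ 2 * q2 k N u X + 2 ^ (N - 2) ∧ 2 * q2 k N u X ≤ u + 2 ^ (N - 2) := by
  obtain ⟨v, hvN, hbit, hlowv⟩ := exists_lsb h2
  have hN2 : 2 ≤ N := by
    rcases Nat.lt_or_ge N 2 with h | h
    · exfalso; interval_cases N <;> simp_all
    · exact h
  have hvk : v < k := by omega
  have hqcN : qc k X (2 ^ N) = 2 ^ (N - 1) := qc_pow hvk hbit hlowv (by omega)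
  have hvpow : 2 ^ v ≤ 2 ^ (N - 2) := Nat.pow_le_pow_right (by norm_num) (by omega)
  have hdev := qc_dev hvk hbit hlowv u
  have hq2u : q2 k N u X ≤ u := by
    unfold q2
    calc ((Finset.range u).filter _).card ≤ (Finset.range u).card :=
          Finset.card_filter_le _ _
      _ = u := Finset.card_range u
  have hq2qc : q2 k N u X = (if bz X (N-1) = 1 then u - qc k X u else qc k X u) := by
    have hsplit : ∀ s < u, ip k X (2 ^ (N-1) + s) = bz X (N-1) + ip k X s := by
      intro s hs
      rw [show 2 ^ (N-1) + s = 2 ^ (N-1) * 1 + s by ring,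
        ip_split k (N-1) 1 s (by omega), mul_one, ip_two_pow X (by omega)]
    rcases zmod2_cases (bz X (N-1)) with hb | hb
    · rw [hb, if_neg (by decide)]
      unfold q2 qc
      apply count_congr
      intro s hs
      rw [hsplit s hs, hb, zero_add]
    · rw [hb, if_pos rfl]
      unfold q2
      have he : ((Finset.range u).filter fun s => ip k X (2 ^ (N-1) + s) = 1).card
          = ((Finset.range u).filter fun s => ip k X s = 0).card := by
        apply count_congr
        intro s hs
        rw [hsplit s hs, hb]
        constructor
        · intro hh
          rcases zmod2_cases (ip k X s) with h0 | h1
          · exact h0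
          · rw [h1] at hh; exact absurd hh (by decide)
        · intro hh; rw [hh]; decide
      rw [he, count_compl]
  have hqcu : qc k X u ≤ u := by
    unfold qc
    calc ((Finset.range u).filter _).card ≤ (Finset.range u).card :=
          Finset.card_filter_le _ _
      _ = u := Finset.card_range u
  have hN20 : (0:ℕ) < 2 ^ (N - 2) := Nat.two_pow_pos _
  have hv0 : (0:ℕ) < 2 ^ v := Nat.two_pow_pos _
  refine ⟨?_, hq2u, ?_, ?_⟩
  · rw [wt_eq hN1 hNk hu hn X hX0 hXk, hqcN]
  · rw [hq2qc]; split <;> omega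
  · rw [hq2qc]; split <;> omega

/-- Flipping bit `N-1` complements the partial count `q2`. -/
lemma q2_flip (hN1 : 1 ≤ N) (hNk : N + 1 ≤ k) (hu : u ≤ 2 ^ (N - 1)) (X : ℕ) :
    q2 k N u (X ^^^ 2 ^ (N - 1)) = u - q2 k N u X := by
  have key : ∀ s < u, ip k (X ^^^ 2 ^ (N - 1)) (2 ^ (N - 1) + s) =
      ip k X (2 ^ (N - 1) + s) + 1 := by
    intro s hs
    rw [ip_xor]
    congr 1
    rw [show (2:ℕ) ^ (N-1) + s = 2 ^ (N-1) * 1 + s by ring,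
      ip_split k (N-1) 1 s (by omega), mul_one,
      ip_two_pow _ (by omega),
      ip_low_zero (t := N-1) (fun i hi => Nat.testBit_two_pow_of_ne (by omega)) (by omega)]
    rw [add_zero, bz]
    simp [Nat.testBit_two_pow_self]
  unfold q2
  have he : ((Finset.range u).filter fun s =>
      ip k (X ^^^ 2 ^ (N-1)) (2 ^ (N - 1) + s) = 1).card =
      ((Finset.range u).filter fun s => ip k X (2 ^ (N - 1) + s) = 0).card := by
    apply count_congr
    intro s hs
    rw [key s hs]
    constructor
    · intro hh
      rcases zmod2_cases (ip k X (2 ^ (N-1) + s)) with h0 | h1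
      · exact h0
      · rw [h1] at hh; exact absurd hh (by decide)
    · intro hh; rw [hh]; decide
  rw [he]
  have h := Finset.card_filter_add_card_filter_not
    (s := Finset.range u) (p := fun s => ip k X (2 ^ (N-1) + s) = 1)
  rw [Finset.card_range] at h
  have h2 : ((Finset.range u).filter fun s => ¬ ip k X (2 ^ (N-1) + s) = 1).card
      = ((Finset.range u).filter fun s => ip k X (2 ^ (N-1) + s) = 0).card := by
    apply count_congr; intro s _; exact zmod2_ne_one
  omega

/-- Facts about the pairing `X ↦ X ^^^ 2^(N-1)`. -/
lemma sigma_facts (hN1 : 1 ≤ N) (hNk : N + 1 ≤ k) (X : ℕ)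
    (hXk : X < 2 ^ k) (h2 : X % 2 ^ (N - 1) ≠ 0) :
    (X ^^^ 2 ^ (N - 1)) % 2 ^ (N - 1) ≠ 0 ∧ 1 ≤ X ^^^ 2 ^ (N - 1) ∧
      X ^^^ 2 ^ (N - 1) < 2 ^ k ∧ (X ^^^ 2 ^ (N - 1)) ^^^ 2 ^ (N - 1) = X := by
  have hbits : ∀ i < N - 1, (X ^^^ 2 ^ (N - 1)).testBit i = X.testBit i := by
    intro i hi
    rw [Nat.testBit_xor, Nat.testBit_two_pow_of_ne (by omega), Bool.xor_false]
  have hmod : (X ^^^ 2 ^ (N - 1)) % 2 ^ (N - 1) ≠ 0 := by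
    intro hc
    apply h2
    rw [mod_zero_bits] at hc ⊢
    intro i hi
    rw [← hbits i hi]
    exact hc i hi
  refine ⟨hmod, ?_, ?_, ?_⟩
  · rcases Nat.eq_zero_or_pos (X ^^^ 2 ^ (N - 1)) with h0 | h0
    · exfalso; apply hmod; rw [h0]; simp
    · exact h0
  · exact Nat.xor_lt_two_pow hXk
      (Nat.pow_lt_pow_right (by norm_num) (by omega))
  · rw [Nat.xor_assoc, Nat.xor_self, Nat.xor_zero]

end Weight

/-! ### The code is the image of `ψ` -/

section Code

variable {k n : ℕ}

lemma psi_expand (X : ℕ) :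
    psi k n X = ∑ i : Fin k, bz X (k - 1 - (i : ℕ)) • Hrow k n ((i : ℕ) + 1) := by
  funext j
  simp only [Finset.sum_apply, Pi.smul_apply, smul_eq_mul]
  have hterm : ∀ i : Fin k,
      bz X (k - 1 - (i:ℕ)) * Hrow k n ((i:ℕ) + 1) j =
      bz X (k - 1 - (i:ℕ)) * bz (colVal k (j:ℕ)) (k - 1 - (i:ℕ)) := by
    intro i
    congr 1
    unfold Hrow bz
    rw [show k - ((i:ℕ) + 1) = k - 1 - (i:ℕ) by omega]
  rw [Finset.sum_congr rfl (fun i _ => hterm i)]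
  rw [Fin.sum_univ_eq_sum_range (fun i => bz X (k - 1 - i) * bz (colVal k (j:ℕ)) (k - 1 - i)) k]
  rw [Finset.sum_range_reflect (fun i => bz X i * bz (colVal k (j:ℕ)) i) k]
  rfl

lemma psi_mem (X : ℕ) : psi k n X ∈ SCode k n := by
  rw [psi_expand]
  exact Submodule.sum_mem _ fun i _ =>
    Submodule.smul_mem _ _ (Submodule.subset_span ⟨i, rfl⟩)

lemma psi_zero : psi k n 0 = 0 := by
  funext j
  unfold psi
  rw [ip_zero_left]
  rfl

lemma psi_row (i : Fin k) : psi k n (2 ^ (k - 1 - (i : ℕ))) = Hrow k n ((i : ℕ) + 1) := by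
  funext j
  unfold psi Hrow
  rw [ip_comm, ip_two_pow _ (by omega)]
  unfold bz
  rw [show k - ((i:ℕ) + 1) = k - 1 - (i:ℕ) by omega]

lemma SCode_sub (c : Fin n → ZMod 2) (hc : c ∈ SCode k n) :
    ∃ X, X < 2 ^ k ∧ psi k n X = c := by
  induction hc using Submodule.span_induction with
  | mem x hx =>
    obtain ⟨i, rfl⟩ := hx
    exact ⟨2 ^ (k - 1 - (i:ℕ)), Nat.pow_lt_pow_right (by norm_num) (by omega), psi_row i⟩
  | zero => exact ⟨0, Nat.two_pow_pos k, psi_zero⟩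
  | add x y _ _ hx hy =>
    obtain ⟨X, hX, rfl⟩ := hx
    obtain ⟨Y, hY, rfl⟩ := hy
    refine ⟨X ^^^ Y, Nat.xor_lt_two_pow hX hY, ?_⟩
    funext j
    unfold psi
    rw [ip_xor]
    rfl
  | smul a x _ hx =>
    obtain ⟨X, hX, rfl⟩ := hx
    rcases zmod2_cases a with h | h
    · refine ⟨0, Nat.two_pow_pos k, ?_⟩
      rw [h, zero_smul, psi_zero]
    · exact ⟨X, hX, by rw [h, one_smul]⟩

lemma psi_inj (hk1 : 1 ≤ k) (hn_ge : 2 ^ (k - 1) ≤ n) :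
    Set.InjOn (psi k n) {X | X < 2 ^ k} := by
  have hcol0 : ∀ b : ℕ, b < 2 ^ (k-1) → colVal k b = 2 ^ (k - 1) + b := by
    intro b hb
    have hks : k - 1 + 1 = k := by omega
    have h2k : (2:ℕ) ^ k = 2 * 2 ^ (k-1) := by
      rw [← pow_succ']; congr 1; omega
    have := colVal_eq (k := k) (M := k - 1) (j := b) (by omega)
      (by rw [hks]; omega) (by omega)
    rw [hks] at this
    rw [this]
    omega
  have key : ∀ Z < 2 ^ k, psi k n Z = 0 → Z = 0 := by
    intro Z hZ hpsi
    have hbitk : bz Z (k - 1) = 0 := by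
      have h0 : (0:ℕ) < n := by
        have := Nat.two_pow_pos (k-1); omega
      have peval := congrFun hpsi ⟨0, h0⟩
      unfold psi at peval
      simp only [Pi.zero_apply] at peval
      rw [hcol0 0 (Nat.two_pow_pos _)] at peval
      rw [show (2:ℕ) ^ (k-1) + 0 = 2 ^ (k-1) by ring] at peval
      rw [ip_two_pow _ (by omega)] at peval
      exact peval
    have hbits : ∀ b, b < k - 1 → bz Z b = 0 := by
      intro b hb
      have hblt : (2:ℕ) ^ b < 2 ^ (k-1) := Nat.pow_lt_pow_right (by norm_num) (by omega)
      have hjn : (2:ℕ) ^ b < n := by omega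
      have peval := congrFun hpsi ⟨2 ^ b, hjn⟩
      unfold psi at peval
      simp only [Pi.zero_apply] at peval
      rw [hcol0 (2 ^ b) hblt] at peval
      rw [show (2:ℕ) ^ (k-1) + 2 ^ b = 2 ^ (k-1) * 1 + 2 ^ b by ring] at peval
      rw [ip_split k (k-1) 1 (2 ^ b) hblt, mul_one] at peval
      rw [ip_two_pow _ (by omega), ip_two_pow _ (by omega)] at peval
      rw [hbitk, zero_add] at peval
      exact peval
    apply Nat.eq_of_testBit_eq
    intro i
    rw [Nat.zero_testBit]
    rcases Nat.lt_or_ge i k with hik | hik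
    · rcases Nat.lt_or_ge i (k - 1) with hik1 | hik1
      · have hbz := hbits i hik1
        unfold bz at hbz
        by_contra hc
        rw [Bool.not_eq_false] at hc
        rw [hc] at hbz
        exact absurd hbz (by decide)
      · have hieq : i = k - 1 := by omega
        subst hieq
        by_contra hc
        rw [Bool.not_eq_false] at hc
        unfold bz at hbitk
        rw [hc] at hbitk
        exact absurd hbitk (by decide)
    · exact Nat.testBit_lt_two_pow
        (lt_of_lt_of_le hZ (Nat.pow_le_pow_right (by norm_num) hik))
  intro X hX Y hY hXY
  simp only [Set.mem_setOf_eq] at hX hY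
  have hZ : psi k n (X ^^^ Y) = 0 := by
    funext j
    unfold psi
    rw [ip_xor]
    have hcf : ip k X (colVal k (j:ℕ)) = ip k Y (colVal k (j:ℕ)) := congrFun hXY j
    rw [hcf, CharTwo.add_self_eq_zero]
    rfl
  have := key (X ^^^ Y) (Nat.xor_lt_two_pow hX hY) hZ
  exact Nat.eq_of_testBit_eq fun i => by
    have := congrArg (Nat.testBit · i) this
    simpa [Nat.testBit_xor] using this

end Code




/-! ### Real-variable inequalities -/

section RealIneq

lemma pow_pair_le (x y : ℝ) (hy : 0 ≤ y) (hxy : y ≤ x) {c a : ℕ} (hca : c ≤ a) :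
    x ^ c * y ^ (a - c) + x ^ (a - c) * y ^ c ≤ x ^ a + y ^ a := by
  have h1 : 0 ≤ (x ^ c - y ^ c) * (x ^ (a - c) - y ^ (a - c)) := by
    apply mul_nonneg
    · have := pow_le_pow_left₀ hy hxy c; linarith
    · have := pow_le_pow_left₀ hy hxy (a - c); linarith
  have hxa : x ^ c * x ^ (a - c) = x ^ a := by rw [← pow_add]; congr 1; omega
  have hya : y ^ c * y ^ (a - c) = y ^ a := by rw [← pow_add]; congr 1; omega
  nlinarith [h1]

lemma geom_bound (a : ℕ) (x y : ℝ) (hy : 0 ≤ y) (hxy : y ≤ x) :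
    (x ^ a - y ^ a) * (x + y) ≤ (a : ℝ) * ((x - y) * (x ^ a + y ^ a)) := by
  have hgeom : (∑ i ∈ Finset.range a, x ^ i * y ^ (a - 1 - i)) * (x - y)
      = x ^ a - y ^ a := geom_sum₂_mul x y a
  rw [← hgeom]
  have hsum : (∑ i ∈ Finset.range a, x ^ i * y ^ (a - 1 - i)) * (x + y)
      ≤ (a : ℝ) * (x ^ a + y ^ a) := by
    have e1 : (∑ i ∈ Finset.range a, x ^ i * y ^ (a - 1 - i)) * (x + y)
        = ∑ i ∈ Finset.range a,
            (x ^ (i + 1) * y ^ (a - (i + 1)) + x ^ i * y ^ (a - i)) := by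
      rw [Finset.sum_mul]
      apply Finset.sum_congr rfl
      intro i hi
      simp only [Finset.mem_range] at hi
      have e2 : a - 1 - i = a - (i + 1) := by omega
      have e3 : y ^ (a - i) = y ^ (a - (i+1)) * y := by
        rw [← pow_succ]; congr 1; omega
      rw [e2, e3]; ring
    have e4 : ∑ i ∈ Finset.range a, x ^ i * y ^ (a - i)
        = ∑ i ∈ Finset.range a, x ^ (a - 1 - i) * y ^ (a - (a - 1 - i)) := by
      exact (Finset.sum_range_reflect (fun i => x ^ i * y ^ (a - i)) a).symm
    have e5 : ∑ i ∈ Finset.range a,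
          (x ^ (i + 1) * y ^ (a - (i + 1)) + x ^ i * y ^ (a - i))
        ≤ ∑ i ∈ Finset.range a, (x ^ a + y ^ a) := by
      rw [Finset.sum_add_distrib, e4, ← Finset.sum_add_distrib]
      apply Finset.sum_le_sum
      intro i hi
      simp only [Finset.mem_range] at hi
      have e6 : a - (a - 1 - i) = i + 1 := by omega
      have e7 : a - 1 - i = a - (i + 1) := by omega
      rw [e6, e7]
      have := pow_pair_le x y hy hxy (c := i + 1) (a := a) (by omega)
      linarith [this]
    rw [e1]
    calc ∑ i ∈ Finset.range a, (x ^ (i+1) * y ^ (a - (i+1)) + x ^ i * y ^ (a - i))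
        ≤ ∑ _i ∈ Finset.range a, (x ^ a + y ^ a) := e5
      _ = (a : ℝ) * (x ^ a + y ^ a) := by
          rw [Finset.sum_const, Finset.card_range, nsmul_eq_mul]
  calc (∑ i ∈ Finset.range a, x ^ i * y ^ (a - 1 - i)) * (x - y) * (x + y)
      = ((∑ i ∈ Finset.range a, x ^ i * y ^ (a - 1 - i)) * (x + y)) * (x - y) := by ring
    _ ≤ ((a : ℝ) * (x ^ a + y ^ a)) * (x - y) := by
        apply mul_le_mul_of_nonneg_right hsum (by linarith)
    _ = (a : ℝ) * ((x - y) * (x ^ a + y ^ a)) := by ring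

lemma pair_term_nonneg (n' w w' : ℕ) (hw : 1 ≤ w) (hw' : 1 ≤ w')
    (hsum : w + w' = n') (hle : w ≤ w') (ha : (w' - w) * (w' - w) ≤ n')
    (p : ℝ) (hp0 : 0 < p) (hp : p ≤ 1 / 2) :
    0 ≤ p ^ (w - 1) * (1 - p) ^ (n' - w - 1) * ((w : ℝ) - n' * p)
      + p ^ (w' - 1) * (1 - p) ^ (n' - w' - 1) * ((w' : ℝ) - n' * p) := by
  set a := w' - w with hadef
  have hy0 : (0:ℝ) ≤ p := le_of_lt hp0
  have hyx : p ≤ 1 - p := by linarith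
  have hx0 : (0:ℝ) ≤ 1 - p := le_trans hy0 hyx
  have e1 : n' - w - 1 = (w - 1) + a := by omega
  have e2 : n' - w' - 1 = w - 1 := by omega
  have e3 : w' - 1 = (w - 1) + a := by omega
  have hRw : 2 * (w : ℝ) = (n' : ℝ) - (a : ℝ) := by
    have hn : 2 * w + a = n' := by omega
    have := congrArg (fun t : ℕ => (t : ℝ)) hn
    push_cast at this
    linarith
  have hRw' : 2 * (w' : ℝ) = (n' : ℝ) + (a : ℝ) := by
    have hn : 2 * w' = n' + a := by omega
    have := congrArg (fun t : ℕ => (t : ℝ)) hn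
    push_cast at this
    linarith
  have haa : (a : ℝ) * (a : ℝ) ≤ (n' : ℝ) := by exact_mod_cast ha
  have hbr : 0 ≤ (1 - p) ^ a * ((w : ℝ) - n' * p) + p ^ a * ((w' : ℝ) - n' * p) := by
    have hK := geom_bound a (1 - p) p hy0 hyx
    have hxp1 : (1 - p) + p = 1 := by ring
    have he : ((1-p) ^ a - p ^ a) * ((1 - p) + p) = (1-p) ^ a - p ^ a := by
      rw [hxp1]; ring
    rw [he] at hK
    have hxy0 : 0 ≤ ((1 - p) - p) * ((1-p) ^ a + p ^ a) := by
      apply mul_nonneg (by linarith)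
      have h5 := pow_nonneg hx0 a
      have h6 := pow_nonneg hy0 a
      linarith
    have h3 : (a:ℝ) * ((1-p) ^ a - p ^ a)
        ≤ (n':ℝ) * (((1-p) - p) * ((1-p) ^ a + p ^ a)) := by
      have h1 : (a : ℝ) * ((1-p) ^ a - p ^ a)
          ≤ (a : ℝ) * ((a : ℝ) * (((1-p) - p) * ((1-p) ^ a + p ^ a))) :=
        mul_le_mul_of_nonneg_left hK (Nat.cast_nonneg a)
      have h2 : (a : ℝ) * (a : ℝ) * (((1-p) - p) * ((1-p) ^ a + p ^ a))
          ≤ (n' : ℝ) * (((1-p) - p) * ((1-p) ^ a + p ^ a)) :=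
        mul_le_mul_of_nonneg_right haa hxy0
      nlinarith [h1, h2]
    have key : 2 * ((1-p) ^ a * ((w : ℝ) - n' * p) + p ^ a * ((w' : ℝ) - n' * p))
        = (n':ℝ) * (((1-p) - p) * ((1-p) ^ a + p ^ a))
          - (a:ℝ) * ((1-p) ^ a - p ^ a) := by
      linear_combination ((1-p) ^ a) * hRw + (p ^ a) * hRw'
    linarith [key, h3]
  have hfac : p ^ (w - 1) * (1 - p) ^ ((w - 1) + a) * ((w : ℝ) - n' * p)
      + p ^ ((w - 1) + a) * (1 - p) ^ (w - 1) * ((w' : ℝ) - n' * p)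
      = (p ^ (w - 1) * (1 - p) ^ (w - 1))
        * ((1 - p) ^ a * ((w : ℝ) - n' * p) + p ^ a * ((w' : ℝ) - n' * p)) := by
    rw [pow_add, pow_add]; ring
  rw [e1, e2, e3, hfac]
  exact mul_nonneg (mul_nonneg (pow_nonneg hy0 _) (pow_nonneg hx0 _)) hbr

lemma hasDeriv_term (w m : ℕ) (p : ℝ) :
    HasDerivAt (fun q : ℝ => q ^ w * (1 - q) ^ (m - w))
      ((w : ℝ) * p ^ (w - 1) * (1 - p) ^ (m - w)
        - ((m - w : ℕ) : ℝ) * p ^ w * (1 - p) ^ (m - w - 1)) p := by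
  have h1 : HasDerivAt (fun q : ℝ => q ^ w) ((w : ℝ) * p ^ (w - 1)) p :=
    hasDerivAt_pow w p
  have h2 : HasDerivAt (fun q : ℝ => 1 - q) (-1) p := by
    simpa using (hasDerivAt_id p).const_sub 1
  have h3 := h2.fun_pow (m - w)
  have h4 := h1.fun_mul h3
  exact h4.congr_deriv (by ring)

lemma deriv_term_factored (w m : ℕ) (hw : 1 ≤ w) (hwm : w + 1 ≤ m) (p : ℝ) :
    (w : ℝ) * p ^ (w - 1) * (1 - p) ^ (m - w)
      - ((m - w : ℕ) : ℝ) * p ^ w * (1 - p) ^ (m - w - 1)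
    = p ^ (w - 1) * (1 - p) ^ (m - w - 1) * ((w : ℝ) - m * p) := by
  obtain ⟨d, hd⟩ : ∃ d, m - w = d + 1 := ⟨m - w - 1, by omega⟩
  have hd2 : m - w - 1 = d := by omega
  have hw2 : w = (w - 1) + 1 := by omega
  have hm : (m : ℝ) = (w : ℝ) + (d : ℝ) + 1 := by
    have : m = w + d + 1 := by omega
    rw [this]; push_cast; ring
  rw [hd2, hd, hm]
  have hpw : p ^ w = p ^ (w - 1) * p := by
    conv_lhs => rw [hw2]
    rw [pow_succ]
  rw [hpw]
  have hxd : (1 - p) ^ (d + 1) = (1 - p) ^ d * (1 - p) := by rw [pow_succ]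
  rw [hxd]
  push_cast
  ring

lemma term_nonneg_of_ge (w m : ℕ) (hw1 : 1 ≤ w) (hwn : w ≤ m) (hge : m ≤ 2 * w)
    (p : ℝ) (hp0 : 0 < p) (hp2 : p ≤ 1 / 2) :
    0 ≤ (w : ℝ) * p ^ (w - 1) * (1 - p) ^ (m - w)
      - ((m - w : ℕ) : ℝ) * p ^ w * (1 - p) ^ (m - w - 1) := by
  have hx0 : (0:ℝ) ≤ 1 - p := by linarith
  rcases eq_or_lt_of_le hwn with heq | hlt
  · subst heq
    have h1 : (0:ℝ) ≤ (w:ℝ) * p ^ (w - 1) :=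
      mul_nonneg (Nat.cast_nonneg w) (pow_nonneg (le_of_lt hp0) _)
    simpa [Nat.sub_self] using h1
  · rw [deriv_term_factored w m hw1 (by omega) p]
    apply mul_nonneg (mul_nonneg (pow_nonneg (le_of_lt hp0) _) (pow_nonneg hx0 _))
    have hcast : (m : ℝ) ≤ 2 * (w : ℝ) := by exact_mod_cast hge
    nlinarith [Nat.cast_nonneg (α := ℝ) m]

end RealIneq


/-! ### `Pue` as a sum over codeword indices -/

section PueSum

variable {k n : ℕ}

lemma wt_le_n (X : ℕ) : hammingNorm (psi k n X) ≤ n := by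
  have h := hammingNorm_le_card_fintype (x := psi k n X)
  simpa using h

lemma Pue_eq_sum (hk1 : 1 ≤ k) (hn_ge : 2 ^ (k - 1) ≤ n) (p : ℝ) :
    Pue (SCode k n) p = ∑ X ∈ Finset.Ico 1 (2 ^ k),
      p ^ hammingNorm (psi k n X) * (1 - p) ^ (n - hammingNorm (psi k n X)) := by
  have hinj := psi_inj (k := k) (n := n) hk1 hn_ge
  have hwt0 : hammingNorm (psi k n (0 : ℕ)) = 0 := by
    rw [psi_zero]; exact hammingNorm_eq_zero.mpr rfl
  have hwt_pos : ∀ X, 1 ≤ X → X < 2 ^ k → 1 ≤ hammingNorm (psi k n X) := by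
    intro X h1 h2
    by_contra hc
    have h0 : hammingNorm (psi k n X) = 0 := by omega
    have hpz : psi k n X = 0 := hammingNorm_eq_zero.mp h0
    have : X = 0 := by
      apply hinj (Set.mem_setOf_eq ▸ h2) (Set.mem_setOf_eq ▸ Nat.two_pow_pos k)
      rw [hpz, psi_zero]
    omega
  have hnum : ∀ w, 1 ≤ w → numWt (SCode k n) w =
      ((Finset.range (2 ^ k)).filter fun X => hammingNorm (psi k n X) = w).card := by
    intro w hw
    unfold numWt
    have hset : {c : Fin n → ZMod 2 | c ∈ SCode k n ∧ hammingNorm c = w} =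
        psi k n '' {X | X < 2 ^ k ∧ hammingNorm (psi k n X) = w} := by
      ext c
      constructor
      · rintro ⟨hc, hwc⟩
        obtain ⟨X, hX, rfl⟩ := SCode_sub c hc
        exact ⟨X, ⟨hX, hwc⟩, rfl⟩
      · rintro ⟨X, ⟨hX, hwc⟩, rfl⟩
        exact ⟨psi_mem X, hwc⟩
    rw [hset, Set.ncard_image_of_injOn (hinj.mono fun x hx => hx.1)]
    have hco : {X | X < 2 ^ k ∧ hammingNorm (psi k n X) = w} =
        ↑((Finset.range (2 ^ k)).filter fun X => hammingNorm (psi k n X) = w) := by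
      ext X
      simp [Finset.mem_filter, Finset.mem_range]
    rw [hco, Set.ncard_coe_finset]
  unfold Pue
  have step1 : ∀ w ∈ Finset.Icc 1 n,
      (numWt (SCode k n) w : ℝ) * p ^ w * (1 - p) ^ (n - w)
      = ∑ X ∈ (Finset.Ico 1 (2 ^ k)).filter
          (fun X => hammingNorm (psi k n X) = w),
          p ^ hammingNorm (psi k n X) * (1 - p) ^ (n - hammingNorm (psi k n X)) := by
    intro w hw
    rw [Finset.mem_Icc] at hw
    rw [hnum w hw.1]
    have hfeq : (Finset.range (2 ^ k)).filter
          (fun X => hammingNorm (psi k n X) = w)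
        = (Finset.Ico 1 (2 ^ k)).filter
          (fun X => hammingNorm (psi k n X) = w) := by
      ext X
      simp only [Finset.mem_filter, Finset.mem_range, Finset.mem_Ico]
      constructor
      · rintro ⟨h1, h2⟩
        refine ⟨⟨?_, h1⟩, h2⟩
        rcases Nat.eq_zero_or_pos X with rfl | h
        · rw [hwt0] at h2; omega
        · exact h
      · rintro ⟨⟨_, h1⟩, h2⟩
        exact ⟨h1, h2⟩
    rw [hfeq]
    rw [Finset.sum_congr rfl (fun X hX => by
      rw [(Finset.mem_filter.mp hX).2])]
    rw [Finset.sum_const, nsmul_eq_mul]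
    ring
  rw [Finset.sum_congr rfl step1]
  exact Finset.sum_fiberwise_of_maps_to (fun X hX => by
    rw [Finset.mem_Ico] at hX
    rw [Finset.mem_Icc]
    exact ⟨hwt_pos X hX.1 hX.2, wt_le_n X⟩) _

end PueSum


/-! ### Main theorem -/

theorem isProper_main (k N n : ℕ) (hk : 4 ≤ k) (hN1 : 1 ≤ N) (hNk : N + 1 ≤ k)
    (h2N : 2 * N ≤ k + 3) (hn1 : 2 ^ k - 2 ^ N ≤ n) (hn2 : n ≤ 2 ^ k - 2 ^ (N - 1)) :
    IsProper (SCode k n) := by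
  have hNhalf : (2:ℕ) ^ N = 2 * 2 ^ (N - 1) := by rw [← pow_succ']; congr 1; omega
  have hkhalf : (2:ℕ) ^ k = 2 * 2 ^ (k - 1) := by rw [← pow_succ']; congr 1; omega
  have hNK : (2:ℕ) ^ N ≤ 2 ^ (k - 1) := Nat.pow_le_pow_right (by norm_num) (by omega)
  have hN10 : (0:ℕ) < 2 ^ (N - 1) := Nat.two_pow_pos _
  have hN20 : (0:ℕ) < 2 ^ (N - 2) := Nat.two_pow_pos _
  have hk10 : (0:ℕ) < 2 ^ (k - 1) := Nat.two_pow_pos _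
  have hN1K : (2:ℕ) ^ (N - 1) ≤ 2 ^ (k - 1) :=
    Nat.pow_le_pow_right (by norm_num) (by omega)
  have h2N4 : (2:ℕ) ^ (N - 2) * 2 ^ (N - 2) ≤ 2 ^ (k - 1) := by
    rw [← pow_add]
    exact Nat.pow_le_pow_right (by norm_num) (by omega)
  set u := n - (2 ^ k - 2 ^ N) with hu_def
  have hn : n = 2 ^ k - 2 ^ N + u := by omega
  have hu : u ≤ 2 ^ (N - 1) := by omega
  have hn_ge : 2 ^ (k - 1) ≤ n := by omega
  have hn_lt : n < 2 ^ k := by omega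
  have hbase1 : 1 ≤ 2 ^ (k - 1) - 2 ^ (N - 1) := by omega
  have hPG : Pue (SCode k n) = fun p : ℝ => ∑ X ∈ Finset.Ico 1 (2 ^ k),
      p ^ hammingNorm (psi k n X) * (1 - p) ^ (n - hammingNorm (psi k n X)) :=
    funext (Pue_eq_sum (by omega) hn_ge)
  unfold IsProper
  rw [hPG]
  have hG : ∀ p : ℝ, HasDerivAt (fun q : ℝ => ∑ X ∈ Finset.Ico 1 (2 ^ k),
      q ^ hammingNorm (psi k n X) * (1 - q) ^ (n - hammingNorm (psi k n X)))
      (∑ X ∈ Finset.Ico 1 (2 ^ k),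
        ((hammingNorm (psi k n X) : ℝ) * p ^ (hammingNorm (psi k n X) - 1)
            * (1 - p) ^ (n - hammingNorm (psi k n X))
          - ((n - hammingNorm (psi k n X) : ℕ) : ℝ) * p ^ hammingNorm (psi k n X)
            * (1 - p) ^ (n - hammingNorm (psi k n X) - 1))) p := by
    intro p
    exact HasDerivAt.fun_sum (fun X _ => hasDeriv_term (hammingNorm (psi k n X)) n p)
  apply monotoneOn_of_deriv_nonneg (convex_Icc (0:ℝ) (1/2))
  · exact (Differentiable.continuous (fun p => (hG p).differentiableAt)).continuousOn
  · intro p _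
    exact (hG p).differentiableAt.differentiableWithinAt
  · intro p hp
    simp only [interior_Icc, Set.mem_Ioo] at hp
    obtain ⟨hp0, hp2⟩ := hp
    rw [(hG p).deriv]
    have hsplit := Finset.sum_filter_add_sum_filter_not (Finset.Ico 1 (2 ^ k))
      (fun X => X % 2 ^ (N - 1) = 0)
      (fun X => ((hammingNorm (psi k n X) : ℝ) * p ^ (hammingNorm (psi k n X) - 1)
            * (1 - p) ^ (n - hammingNorm (psi k n X))
          - ((n - hammingNorm (psi k n X) : ℕ) : ℝ) * p ^ hammingNorm (psi k n X)
            * (1 - p) ^ (n - hammingNorm (psi k n X) - 1)))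
    have hS0 : 0 ≤ ∑ X ∈ (Finset.Ico 1 (2 ^ k)).filter (fun X => X % 2 ^ (N - 1) = 0),
        ((hammingNorm (psi k n X) : ℝ) * p ^ (hammingNorm (psi k n X) - 1)
            * (1 - p) ^ (n - hammingNorm (psi k n X))
          - ((n - hammingNorm (psi k n X) : ℕ) : ℝ) * p ^ hammingNorm (psi k n X)
            * (1 - p) ^ (n - hammingNorm (psi k n X) - 1)) := by
      apply Finset.sum_nonneg
      intro X hX
      rw [Finset.mem_filter, Finset.mem_Ico] at hX
      obtain ⟨⟨hX1, hXk⟩, hXm⟩ := hX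
      have hwf : n ≤ 2 * hammingNorm (psi k n X) ∧ 1 ≤ hammingNorm (psi k n X)
          ∧ hammingNorm (psi k n X) ≤ n := by
        by_cases hmN : X % 2 ^ N = 0
        · rw [wt_A hN1 hNk hu hn X hX1 hXk hmN]
          refine ⟨by omega, by omega, by omega⟩
        · rw [wt_B1 hN1 hNk hu hn X hX1 hXk hmN hXm]
          refine ⟨by omega, by omega, by omega⟩
      exact term_nonneg_of_ge _ n hwf.2.1 hwf.2.2 hwf.1 p hp0 (le_of_lt hp2)
    have hS2 : 0 ≤ ∑ X ∈ (Finset.Ico 1 (2 ^ k)).filter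
        (fun X => ¬ X % 2 ^ (N - 1) = 0),
        ((hammingNorm (psi k n X) : ℝ) * p ^ (hammingNorm (psi k n X) - 1)
            * (1 - p) ^ (n - hammingNorm (psi k n X))
          - ((n - hammingNorm (psi k n X) : ℕ) : ℝ) * p ^ hammingNorm (psi k n X)
            * (1 - p) ^ (n - hammingNorm (psi k n X) - 1)) := by
      have hmem : ∀ X ∈ (Finset.Ico 1 (2 ^ k)).filter
          (fun X => ¬ X % 2 ^ (N - 1) = 0),
          X ^^^ 2 ^ (N - 1) ∈ (Finset.Ico 1 (2 ^ k)).filter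
          (fun X => ¬ X % 2 ^ (N - 1) = 0) := by
        intro X hX
        rw [Finset.mem_filter, Finset.mem_Ico] at hX ⊢
        obtain ⟨⟨hX1, hXk⟩, hXm⟩ := hX
        obtain ⟨hm', h1', hk', _⟩ := sigma_facts hN1 hNk X hXk hXm
        exact ⟨⟨h1', hk'⟩, hm'⟩
      have hre : ∑ X ∈ (Finset.Ico 1 (2 ^ k)).filter
            (fun X => ¬ X % 2 ^ (N - 1) = 0),
            ((hammingNorm (psi k n X) : ℝ) * p ^ (hammingNorm (psi k n X) - 1)
                * (1 - p) ^ (n - hammingNorm (psi k n X))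
              - ((n - hammingNorm (psi k n X) : ℕ) : ℝ) * p ^ hammingNorm (psi k n X)
                * (1 - p) ^ (n - hammingNorm (psi k n X) - 1))
          = ∑ X ∈ (Finset.Ico 1 (2 ^ k)).filter
            (fun X => ¬ X % 2 ^ (N - 1) = 0),
            ((hammingNorm (psi k n (X ^^^ 2 ^ (N - 1))) : ℝ)
                * p ^ (hammingNorm (psi k n (X ^^^ 2 ^ (N - 1))) - 1)
                * (1 - p) ^ (n - hammingNorm (psi k n (X ^^^ 2 ^ (N - 1))))
              - ((n - hammingNorm (psi k n (X ^^^ 2 ^ (N - 1))) : ℕ) : ℝ)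
                * p ^ hammingNorm (psi k n (X ^^^ 2 ^ (N - 1)))
                * (1 - p) ^ (n - hammingNorm (psi k n (X ^^^ 2 ^ (N - 1))) - 1)) := by
        apply Finset.sum_nbij' (i := fun X => X ^^^ 2 ^ (N - 1))
          (j := fun X => X ^^^ 2 ^ (N - 1)) hmem hmem
        · intro X _
          rw [Nat.xor_assoc, Nat.xor_self, Nat.xor_zero]
        · intro X _
          rw [Nat.xor_assoc, Nat.xor_self, Nat.xor_zero]
        · intro X _
          rw [Nat.xor_assoc, Nat.xor_self, Nat.xor_zero]
      have hpair : ∀ X ∈ (Finset.Ico 1 (2 ^ k)).filter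
          (fun X => ¬ X % 2 ^ (N - 1) = 0),
          0 ≤ ((hammingNorm (psi k n X) : ℝ) * p ^ (hammingNorm (psi k n X) - 1)
                * (1 - p) ^ (n - hammingNorm (psi k n X))
              - ((n - hammingNorm (psi k n X) : ℕ) : ℝ) * p ^ hammingNorm (psi k n X)
                * (1 - p) ^ (n - hammingNorm (psi k n X) - 1))
            + ((hammingNorm (psi k n (X ^^^ 2 ^ (N - 1))) : ℝ)
                * p ^ (hammingNorm (psi k n (X ^^^ 2 ^ (N - 1))) - 1)
                * (1 - p) ^ (n - hammingNorm (psi k n (X ^^^ 2 ^ (N - 1))))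
              - ((n - hammingNorm (psi k n (X ^^^ 2 ^ (N - 1))) : ℕ) : ℝ)
                * p ^ hammingNorm (psi k n (X ^^^ 2 ^ (N - 1)))
                * (1 - p) ^ (n - hammingNorm (psi k n (X ^^^ 2 ^ (N - 1))) - 1)) := by
        intro X hX
        rw [Finset.mem_filter, Finset.mem_Ico] at hX
        obtain ⟨⟨hX1, hXk⟩, hXm⟩ := hX
        obtain ⟨hm', h1', hk', _⟩ := sigma_facts hN1 hNk X hXk hXm
        obtain ⟨hwX, hq2u, hd1, hd2⟩ := wt_B2 hN1 hNk hu hn X hX1 hXk hXm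
        obtain ⟨hwX', _, _, _⟩ :=
          wt_B2 hN1 hNk hu hn (X ^^^ 2 ^ (N - 1)) h1' hk' hm'
        rw [q2_flip hN1 hNk hu X] at hwX'
        set w1 := hammingNorm (psi k n X) with hw1def
        set w2 := hammingNorm (psi k n (X ^^^ 2 ^ (N - 1))) with hw2def
        set q := q2 k N u X with hqdef
        have hsumw : w1 + w2 = n := by omega
        have hw11 : 1 ≤ w1 := by omega
        have hw21 : 1 ≤ w2 := by omega
        have hw1n : w1 + 1 ≤ n := by omega
        have hw2n : w2 + 1 ≤ n := by omega
        have hdlt1 : w2 - w1 ≤ 2 ^ (N - 2) := by omega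
        have hdlt2 : w1 - w2 ≤ 2 ^ (N - 2) := by omega
        rw [deriv_term_factored w1 n hw11 hw1n p, deriv_term_factored w2 n hw21 hw2n p]
        rcases le_total w1 w2 with hle | hle
        · have hdev : (w2 - w1) * (w2 - w1) ≤ n :=
            le_trans (Nat.mul_le_mul hdlt1 hdlt1) (le_trans h2N4 hn_ge)
          exact pair_term_nonneg n w1 w2 hw11 hw21 hsumw hle hdev p hp0 (le_of_lt hp2)
        · have hdev : (w1 - w2) * (w1 - w2) ≤ n :=
            le_trans (Nat.mul_le_mul hdlt2 hdlt2) (le_trans h2N4 hn_ge)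
          have := pair_term_nonneg n w2 w1 hw21 hw11 (by omega) hle hdev p hp0
            (le_of_lt hp2)
          linarith
      have hS2' := Finset.sum_nonneg hpair
      rw [Finset.sum_add_distrib] at hS2'
      rw [← hre] at hS2'
      linarith
    linarith [hsplit, hS0, hS2]

end Stmt9Aux

/-- (a) If `1 ≤ m ≤ k-1` and `m ≥ ⌈(k-3)/2⌉` (equivalently
`(k-3)/2 ≤ m` over `ℝ`, since `m` is an integer), then `S_{n,k}` is proper for
all `2^k - 2^(k-m) ≤ n ≤ 2^k - 2^(k-m-1)`.
(b) `S_{n,k}` is proper for all `2^k - 2^(k-⌈(k-3)/2⌉) ≤ n ≤ 2^k - 1`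
(for `k ≥ 3` one has `⌈(k-3)/2⌉ = (k-2)/2` with natural division). -/
theorem stmt9 (k : ℕ) (hk : 4 ≤ k) :
    (∀ m : ℕ, 1 ≤ m → m ≤ k - 1 → ((k : ℝ) - 3) / 2 ≤ (m : ℝ) →
      ∀ n : ℕ, 2 ^ k - 2 ^ (k - m) ≤ n → n ≤ 2 ^ k - 2 ^ (k - m - 1) →
        IsProper (SCode k n)) ∧
    (∀ n : ℕ, 2 ^ k - 2 ^ (k - (k - 2) / 2) ≤ n → n ≤ 2 ^ k - 1 →
      IsProper (SCode k n)) := by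
  constructor
  · intro m hm1 hmk hmr n hn1 hn2
    have hkR : k ≤ 2 * m + 3 := by
      have h1 : (k : ℝ) ≤ 2 * (m : ℝ) + 3 := by linarith
      exact_mod_cast h1
    exact Stmt9Aux.isProper_main k (k - m) n hk (by omega) (by omega) (by omega)
      hn1 hn2
  · intro n hn1 hn2
    have hk0 : (0:ℕ) < 2 ^ k := Nat.two_pow_pos k
    set r := 2 ^ k - n with hrdef
    have hr1 : 1 ≤ r := by omega
    have hQ : 1 ≤ (k - 2) / 2 := by omega
    have hQle : k - (k - 2) / 2 ≤ k - 1 := by omega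
    have hpowle : (2:ℕ) ^ (k - (k - 2) / 2) ≤ 2 ^ (k - 1) :=
      Nat.pow_le_pow_right (by norm_num) hQle
    have hpowk : (2:ℕ) ^ (k - 1) ≤ 2 ^ k :=
      Nat.pow_le_pow_right (by norm_num) (by omega)
    have hrle : r ≤ 2 ^ (k - (k - 2) / 2) := by omega
    have hex : ∃ N, 1 ≤ N ∧ 2 ^ (N - 1) ≤ r ∧ r ≤ 2 ^ N ∧ N + 1 ≤ k ∧
        2 * N ≤ k + 3 := by
      rcases Nat.lt_or_ge r 2 with hr2 | hr2
      · have hre : r = 1 := by omega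
        refine ⟨1, le_rfl, ?_, ?_, by omega, by omega⟩
        · simpa [hre] using le_rfl
        · omega
      · set L := Nat.log2 (r - 1) with hL
        have h1 : 2 ^ L ≤ r - 1 := by
          rw [hL, Nat.log2_eq_log_two]
          exact Nat.pow_log_le_self 2 (by omega)
        have h2 : r - 1 < 2 ^ (L + 1) := by
          rw [hL, Nat.log2_eq_log_two]
          exact Nat.lt_pow_succ_log_self (by norm_num) _
        have h4 : L < k - (k - 2) / 2 := by
          by_contra hc
          have hge : 2 ^ (k - (k - 2) / 2) ≤ 2 ^ L :=
            Nat.pow_le_pow_right (by norm_num) (by omega)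
          omega
        refine ⟨L + 1, by omega, ?_, by omega, by omega, by omega⟩
        simp only [Nat.add_sub_cancel]
        omega
    obtain ⟨N, hN1, hrN1, hrN2, hNk, h2N⟩ := hex
    have h2NK : (2:ℕ) ^ N ≤ 2 ^ k := Nat.pow_le_pow_right (by norm_num) (by omega)
    exact Stmt9Aux.isProper_main k N n hk hN1 hNk h2N (by omega) (by omega)
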